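/- Let n ≥ 1, let P be an n×n complex unitary matrix with P^n = 1 and trace(P^k) = 0 for every k with 1 ≤ k ≤ n − 1, and let a, b, c, d ∈ ℂ be such that C = !![a, b; c, d] is unitary with b ≠ 0. Set ω := b·c − a·d and Q := (b·c·ω) • (P · (1 − (a·ω)•P)⁻¹). Then trace(Q·Qᴴ) = n·|b|²·(1 − |a|^{2n}) / |1 − (aω)^n|². -/

import Mathlib

open Matrix Finset

private lemma pow_unitary' {n : ℕ} (P : Matrix (Fin n) (Fin n) ℂ)
    (hP : Pᴴ * P = 1) (m : ℕ) : (P ^ m)ᴴ * (P ^ m) = 1 := by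
  induction m with
  | zero => simp
  | succ m ih =>
    have h : (P ^ (m+1))ᴴ * (P ^ (m+1)) = (P ^ m)ᴴ * (Pᴴ * P) * P ^ m := by
      rw [pow_succ' P, conjTranspose_mul]; noncomm_ring
    rw [h, hP, mul_one, ih]

private lemma key_ge' {n : ℕ} (P : Matrix (Fin n) (Fin n) ℂ) (hP : Pᴴ * P = 1)
    (htr : ∀ k : ℕ, 1 ≤ k → k ≤ n - 1 → Matrix.trace (P ^ k) = 0)
    (j k : ℕ) (hkj : k ≤ j) (hj : j < n) :
    Matrix.trace (P ^ (j+1) * (P ^ (k+1))ᴴ) = if j = k then (n : ℂ) else 0 := by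
  have hsplit : P ^ (j+1) = P ^ (j - k) * P ^ (k+1) := by
    rw [← pow_add]; congr 1; omega
  have hun : P ^ (k+1) * (P ^ (k+1))ᴴ = 1 :=
    mul_eq_one_comm.mp (pow_unitary' P hP (k+1))
  have h2 : P ^ (j+1) * (P ^ (k+1))ᴴ = P ^ (j - k) := by
    rw [hsplit, mul_assoc, hun, mul_one]
  rw [h2]
  by_cases h : j = k
  · simp [h, Matrix.trace_one]
  · rw [if_neg h, htr (j - k) (by omega) (by omega)]

private lemma key' {n : ℕ} (P : Matrix (Fin n) (Fin n) ℂ) (hP : Pᴴ * P = 1)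
    (htr : ∀ k : ℕ, 1 ≤ k → k ≤ n - 1 → Matrix.trace (P ^ k) = 0)
    (j k : ℕ) (hj : j < n) (hk : k < n) :
    Matrix.trace (P ^ (j+1) * (P ^ (k+1))ᴴ) = if j = k then (n : ℂ) else 0 := by
  rcases le_or_gt k j with h | h
  · exact key_ge' P hP htr j k h hj
  · have h1 : (P ^ (j+1) * (P ^ (k+1))ᴴ)ᴴ = P ^ (k+1) * (P ^ (j+1))ᴴ := by
      rw [conjTranspose_mul, conjTranspose_conjTranspose]
    have h2 : Matrix.trace (P ^ (j+1) * (P ^ (k+1))ᴴ)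
        = star (Matrix.trace (P ^ (k+1) * (P ^ (j+1))ᴴ)) := by
      rw [← h1, Matrix.trace_conjTranspose, star_star]
    rw [h2, key_ge' P hP htr k j h.le hk, if_neg h.ne, if_neg h.ne', star_zero]

private lemma inv_geom' {n : ℕ} (P : Matrix (Fin n) (Fin n) ℂ) (hPn : P ^ n = 1)
    (x : ℂ) (hx : (1:ℂ) - x ^ n ≠ 0) :
    (1 - x • P)⁻¹ = (1 - x ^ n)⁻¹ • ∑ k ∈ range n, x ^ k • P ^ k := by
  apply Matrix.inv_eq_right_inv
  have hS : ∑ k ∈ range n, x ^ k • P ^ k = ∑ k ∈ range n, (x • P) ^ k := by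
    simp [smul_pow]
  rw [hS, Matrix.mul_smul]
  have h1 : (1 - x • P) * ∑ k ∈ range n, (x • P) ^ k = 1 - (x • P) ^ n := by
    have h0 := mul_geom_sum (x • P) n
    have h2 : (1 - x • P) * ∑ k ∈ range n, (x • P) ^ k
        = -((x • P - 1) * ∑ k ∈ range n, (x • P) ^ k) := by noncomm_ring
    rw [h2, h0]; noncomm_ring
  rw [h1, smul_pow, hPn]
  have h3 : (1 : Matrix (Fin n) (Fin n) ℂ) - x ^ n • 1 = (1 - x ^ n) • 1 := by
    rw [sub_smul, one_smul]
  rw [h3, smul_smul, inv_mul_cancel₀ hx, one_smul]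

private lemma trace_TT' {n : ℕ} (P : Matrix (Fin n) (Fin n) ℂ) (x : ℂ)
    (key : ∀ j k : ℕ, j < n → k < n →
      Matrix.trace (P ^ (j+1) * (P ^ (k+1))ᴴ) = if j = k then (n : ℂ) else 0) :
    Matrix.trace ((∑ k ∈ range n, x ^ k • P ^ (k+1)) *
      (∑ k ∈ range n, x ^ k • P ^ (k+1))ᴴ)
      = (n : ℂ) * ∑ k ∈ range n, (x * star x) ^ k := by
  rw [conjTranspose_sum]
  simp only [conjTranspose_smul, Finset.sum_mul_sum, Matrix.smul_mul, Matrix.mul_smul,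
    Matrix.trace_sum, Matrix.trace_smul]
  have h : ∀ j ∈ range n, ∀ k ∈ range n,
      star (x ^ k) • x ^ j • Matrix.trace (P ^ (j+1) * (P ^ (k+1))ᴴ)
      = if j = k then star (x ^ k) • x ^ j • (n : ℂ) else 0 := by
    intro j hj k hk
    rw [key j k (mem_range.mp hj) (mem_range.mp hk)]
    split <;> simp
  rw [Finset.sum_congr rfl (fun j hj => Finset.sum_congr rfl (fun k hk => h j hj k hk))]
  simp only [Finset.sum_ite_eq, mem_range]
  rw [Finset.sum_congr rfl (fun j hj => if_pos (mem_range.mp hj))]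
  rw [Finset.mul_sum]
  congr 1; ext j
  rw [mul_pow, smul_eq_mul, smul_eq_mul, star_pow]
  ring

theorem stmt_11 (n : ℕ) (hn : 1 ≤ n)
    (P : Matrix (Fin n) (Fin n) ℂ) (hP : Pᴴ * P = 1) (hPn : P ^ n = 1)
    (htr : ∀ k : ℕ, 1 ≤ k → k ≤ n - 1 → Matrix.trace (P ^ k) = 0)
    (a b c d : ℂ)
    (hC : (!![a, b; c, d])ᴴ * !![a, b; c, d] = 1) (hb : b ≠ 0)
    (ω : ℂ) (hω : ω = b * c - a * d)
    (Q : Matrix (Fin n) (Fin n) ℂ)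
    (hQ : Q = (b * c * ω) • (P * (1 - (a * ω) • P)⁻¹)) :
    Matrix.trace (Q * Qᴴ) =
      (((n : ℝ) * ‖b‖ ^ 2 * (1 - ‖a‖ ^ (2 * n)) /
        ‖1 - (a * ω) ^ n‖ ^ 2 : ℝ) : ℂ) := by
  set x : ℂ := a * ω with hxdef
  -- unitarity facts about C
  have hCC : !![a, b; c, d] * (!![a, b; c, d])ᴴ = 1 := mul_eq_one_comm.mp hC
  have h00 := congrFun (congrFun hCC 0) 0
  have g00 := congrFun (congrFun hC 0) 0
  simp only [Matrix.mul_apply, Fin.sum_univ_two, Matrix.conjTranspose_apply,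
    Matrix.one_apply, Matrix.of_apply, Matrix.cons_val', Matrix.cons_val_zero,
    Matrix.cons_val_one, Matrix.head_cons, Matrix.empty_val', Matrix.cons_val_fin_one,
    Matrix.head_fin_const, if_pos rfl] at h00 g00
  simp only [Complex.star_def, if_true] at h00 g00
  have hab : Complex.normSq a + Complex.normSq b = 1 := by
    have : ((Complex.normSq a : ℂ)) + (Complex.normSq b : ℂ) = 1 := by
      rw [← Complex.mul_conj, ← Complex.mul_conj]; exact h00
    exact_mod_cast this
  have hac : Complex.normSq a + Complex.normSq c = 1 := by
    have : ((Complex.normSq a : ℂ)) + (Complex.normSq c : ℂ) = 1 := by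
      rw [← Complex.mul_conj, ← Complex.mul_conj]; linear_combination g00
    exact_mod_cast this
  have hbc : Complex.normSq c = Complex.normSq b := by linarith
  have hωn : Complex.normSq ω = 1 := by
    have hdet := congrArg Matrix.det hC
    rw [Matrix.det_mul, Matrix.det_conjTranspose, Matrix.det_one,
      Matrix.det_fin_two_of] at hdet
    have : ((Complex.normSq ω : ℂ)) = 1 := by
      rw [← Complex.mul_conj, hω]
      calc (b*c - a*d) * (starRingEnd ℂ) (b*c - a*d)
          = (starRingEnd ℂ) (a*d - b*c) * (a*d - b*c) := by
            simp only [map_sub, _root_.map_mul]; ring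
        _ = 1 := hdet
    exact_mod_cast this
  set r : ℝ := Complex.normSq a with hrdef
  have hbn : 0 < Complex.normSq b := Complex.normSq_pos.mpr hb
  have hr1 : r < 1 := by simp only [hrdef]; linarith
  have hr0 : 0 ≤ r := Complex.normSq_nonneg a
  have hrne : r ≠ 1 := ne_of_lt hr1
  have hxn : Complex.normSq x = r := by
    rw [hxdef, Complex.normSq_mul, hωn, mul_one]
  -- invertibility
  have habsx : ‖x‖ < 1 := by
    nlinarith [Complex.sq_norm x, norm_nonneg x, hxn]
  have habsxn : ‖x ^ n‖ < 1 := by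
    rw [norm_pow]
    exact pow_lt_one₀ (norm_nonneg x) habsx (by omega)
  have hxn1 : (1:ℂ) - x ^ n ≠ 0 := by
    intro h
    have : x ^ n = 1 := by linear_combination -h
    rw [this] at habsxn; simp at habsxn
  -- rewrite Q
  set T : Matrix (Fin n) (Fin n) ℂ := ∑ k ∈ range n, x ^ k • P ^ (k+1) with hT
  set s : ℂ := (b * c * ω) * (1 - x ^ n)⁻¹ with hs
  have hQ' : Q = s • T := by
    rw [hQ, inv_geom' P hPn x hxn1, Matrix.mul_smul, smul_smul, Finset.mul_sum]
    rw [hs, hT]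
    congr 1
    refine Finset.sum_congr rfl (fun k _ => ?_)
    rw [Matrix.mul_smul, ← pow_succ']
  -- trace computation
  have hkey := key' P hP htr
  have htrace : Matrix.trace (Q * Qᴴ)
      = (s * star s) * ((n : ℂ) * ∑ k ∈ range n, (x * star x) ^ k) := by
    rw [hQ', conjTranspose_smul, Matrix.smul_mul, Matrix.mul_smul,
      Matrix.trace_smul, Matrix.trace_smul, trace_TT' P x hkey,
      smul_eq_mul, smul_eq_mul]
    ring_nf
  rw [htrace]
  -- scalar computations
  have hss : s * star s
      = (Complex.normSq b : ℂ) * (Complex.normSq b : ℂ)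
        * ((Complex.normSq (1 - x ^ n) : ℂ))⁻¹ := by
    rw [hs]
    rw [Complex.star_def, _root_.map_mul, _root_.map_mul, _root_.map_mul, map_inv₀]
    have e1 : (b * c * ω * (1 - x ^ n)⁻¹) *
        ((starRingEnd ℂ) b * (starRingEnd ℂ) c * (starRingEnd ℂ) ω *
          ((starRingEnd ℂ) (1 - x ^ n))⁻¹)
        = (b * (starRingEnd ℂ) b) * (c * (starRingEnd ℂ) c) * (ω * (starRingEnd ℂ) ω)
          * ((1 - x ^ n) * (starRingEnd ℂ) (1 - x ^ n))⁻¹ := by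
      rw [mul_inv]; ring
    rw [e1, Complex.mul_conj, Complex.mul_conj, Complex.mul_conj, Complex.mul_conj,
      hbc, hωn]
    push_cast
    ring
  have hxx : x * star x = (r : ℂ) := by
    rw [Complex.star_def, Complex.mul_conj, hxn]
  have hG : ∑ k ∈ range n, (x * star x) ^ k
      = ((∑ k ∈ range n, r ^ k : ℝ) : ℂ) := by
    rw [hxx]; push_cast; rfl
  rw [hss, hG]
  -- reduce to a real identity
  have hns : Complex.normSq (1 - x ^ n) ≠ 0 := by
    simpa [Complex.normSq_eq_zero] using hxn1
  have hcast : (Complex.normSq b : ℂ) * (Complex.normSq b : ℂ)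
      * ((Complex.normSq (1 - x ^ n) : ℂ))⁻¹
      * ((n : ℂ) * ((∑ k ∈ range n, r ^ k : ℝ) : ℂ))
      = (((Complex.normSq b * Complex.normSq b / Complex.normSq (1 - x ^ n)
          * (n * ∑ k ∈ range n, r ^ k)) : ℝ) : ℂ) := by
    push_cast
    ring
  rw [hcast]
  congr 1
  -- now a real identity
  have hgeom : ∑ k ∈ range n, r ^ k = (r ^ n - 1) / (r - 1) := geom_sum_eq hrne n
  have habs_a : ‖a‖ ^ (2 * n) = r ^ n := by
    rw [pow_mul, Complex.sq_norm]
  have habs_b : ‖b‖ ^ 2 = Complex.normSq b := Complex.sq_norm b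
  have habs_x : ‖1 - x ^ n‖ ^ 2 = Complex.normSq (1 - x ^ n) :=
    Complex.sq_norm _
  rw [hgeom, habs_a, habs_b, habs_x]
  have hb2 : Complex.normSq b = 1 - r := by linarith
  rw [hb2]
  have hrne' : r - 1 ≠ 0 := sub_ne_zero.mpr hrne
  field_simp
  ring
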